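/- Let the network be a finite connected simple graph and suppose the initial state u₀ has a seed. Then there exist a time T and a map par : X → X such that for every vertex x, par(x) is adjacent to x and x is subordinate to par(x) at time T, i.e. u_T(par(x)) = u_T(x) + 1; moreover, for every vertex x there exists k ≥ 0 such that the iterate par^k(x) lies on a seed of the state u_T. (Thus the directed edges x → par(x), in the direction of subordination, form a spanning functional graph whose cycles are seeds: a spanning forest rooted at seeds.) -/

import Mathlib

/- The Greenberg–Hastings update rule on a simple graph `G` with state space `ZMod n`:
`𝒢u(x) = u(x)+1` if `u(x) ≠ 0`; `𝒢u(x) = 1` if `u(x) = 0` and some neighbor is in state `1`;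
`𝒢u(x) = 0` otherwise. -/
open Classical in
noncomputable def ghUpdate {V : Type*} (n : ℕ) (G : SimpleGraph V) (u : V → ZMod n) :
    V → ZMod n :=
  fun x => if u x = 0 then (if ∃ y, G.Adj x y ∧ u y = 1 then 1 else 0) else u x + 1

/- A state `u` has a seed: a closed walk `x₀, …, x_K = x₀` with `u (x i) = i mod n`. -/
def hasSeed {V : Type*} (n : ℕ) (G : SimpleGraph V) (u : V → ZMod n) : Prop :=
  ∃ (K : ℕ) (x : ℕ → V), 1 ≤ K ∧ x K = x 0 ∧ (∀ i < K, G.Adj (x i) (x (i + 1))) ∧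
    ∀ i ≤ K, u (x i) = (i : ZMod n)

section aux
variable {V : Type*} {n : ℕ} {G : SimpleGraph V} {u₀ : V → ZMod n}

lemma gh_incr {u : V → ZMod n} {x : V} (h : u x ≠ 0) : ghUpdate n G u x = u x + 1 := by
  simp [ghUpdate, h]

lemma gh_excite {u : V → ZMod n} {x : V} (h : u x = 0) (h2 : ∃ y, G.Adj x y ∧ u y = 1) :
    ghUpdate n G u x = u x + 1 := by
  simp [ghUpdate, h, h2]

lemma gh_no {u : V → ZMod n} {x : V} (h : u x = 0) (h2 : ¬ ∃ y, G.Adj x y ∧ u y = 1) :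
    ghUpdate n G u x = 0 := by
  simp [ghUpdate, h, h2]

lemma gh_step (u : V → ZMod n) (x : V) :
    ghUpdate n G u x = u x + 1 ∨ (u x = 0 ∧ ghUpdate n G u x = 0) := by
  by_cases h : u x = 0
  · by_cases h2 : ∃ y, G.Adj x y ∧ u y = 1
    · exact Or.inl (gh_excite h h2)
    · exact Or.inr ⟨h, gh_no h h2⟩
  · exact Or.inl (gh_incr h)

/-- `v` increments at every step from time `t` on. -/
def locked (n : ℕ) (G : SimpleGraph V) (u₀ : V → ZMod n) (v : V) (t : ℕ) : Prop :=
  ∀ s, t ≤ s → (ghUpdate n G)^[s + 1] u₀ v = (ghUpdate n G)^[s] u₀ v + 1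

lemma locked_mono {v : V} {t t' : ℕ} (h : locked n G u₀ v t) (ht : t ≤ t') :
    locked n G u₀ v t' := fun s hs => h s (le_trans ht hs)

lemma locked_run {v : V} {t : ℕ} (h : locked n G u₀ v t) (k : ℕ) :
    (ghUpdate n G)^[t + k] u₀ v = (ghUpdate n G)^[t] u₀ v + (k : ZMod n) := by
  induction k with
  | zero => simp
  | succ k ih =>
      have := h (t + k) (Nat.le_add_right _ _)
      rw [show t + (k+1) = (t + k) + 1 from rfl, this, ih]
      push_cast; ring

end aux

section aux2
variable {V : Type*} {n : ℕ} {G : SimpleGraph V} {u₀ : V → ZMod n}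

lemma iter_succ' (s : ℕ) (v : V) :
    (ghUpdate n G)^[s + 1] u₀ v = ghUpdate n G ((ghUpdate n G)^[s] u₀) v := by
  rw [Function.iterate_succ_apply']

lemma lockedA {x y : V} {t : ℕ} (hadj : G.Adj x y) (hy : locked n G u₀ y t)
    (hoff : (ghUpdate n G)^[t] u₀ y = (ghUpdate n G)^[t] u₀ x + 1) :
    locked n G u₀ x t := by
  have key : ∀ k, (ghUpdate n G)^[t + k] u₀ y = (ghUpdate n G)^[t + k] u₀ x + 1 ∧
      (ghUpdate n G)^[t + k + 1] u₀ x = (ghUpdate n G)^[t + k] u₀ x + 1 := by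
    intro k
    induction k with
    | zero =>
        refine ⟨hoff, ?_⟩
        simp only [Nat.add_zero]
        rw [iter_succ']
        by_cases hz : (ghUpdate n G)^[t] u₀ x = 0
        · exact gh_excite hz ⟨y, hadj, by rw [hoff, hz, zero_add]⟩
        · exact gh_incr hz
    | succ k ih =>
        obtain ⟨h1, h2⟩ := ih
        have hy' := hy (t + k) (Nat.le_add_right _ _)
        have h1' : (ghUpdate n G)^[t + (k+1)] u₀ y = (ghUpdate n G)^[t + (k+1)] u₀ x + 1 := by
          rw [show t + (k+1) = t + k + 1 from rfl, hy', h2, h1]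
        refine ⟨h1', ?_⟩
        rw [iter_succ']
        by_cases hz : (ghUpdate n G)^[t + (k+1)] u₀ x = 0
        · exact gh_excite hz ⟨y, hadj, by rw [h1', hz, zero_add]⟩
        · exact gh_incr hz
  intro s hs
  obtain ⟨k, rfl⟩ := Nat.exists_eq_add_of_le hs
  exact (key k).2
end aux2

section aux3
variable {V : Type*} {n : ℕ} [hn1 : Fact (1 < n)] {G : SimpleGraph V} {u₀ : V → ZMod n}

lemma zmod_eq_of_val_eq {a : ZMod n} {m : ℕ} (h : a.val = m) : a = (m : ZMod n) := by
  subst h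
  haveI : NeZero n := ⟨by have := hn1.out; omega⟩
  rw [ZMod.natCast_val, ZMod.cast_id]

lemma cast_pred : ((n - 1 : ℕ) : ZMod n) = -1 := by
  have h1 : 1 ≤ n := le_of_lt hn1.out
  rw [Nat.cast_sub h1, ZMod.natCast_self]; ring

lemma cast_pred2 : ((n - 2 : ℕ) : ZMod n) = -2 := by
  have h1 : 2 ≤ n := hn1.out
  rw [Nat.cast_sub h1, ZMod.natCast_self]; push_cast; ring

omit hn1 in
lemma first_stall {x y : V} {t : ℕ} (hy : locked n G u₀ y t) :
    ∀ m s, t ≤ s → ¬ ((ghUpdate n G)^[s + m + 1] u₀ x = (ghUpdate n G)^[s + m] u₀ x + 1) →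
    ∃ s', s ≤ s' ∧
      (ghUpdate n G)^[s'] u₀ y - (ghUpdate n G)^[s'] u₀ x
        = (ghUpdate n G)^[s] u₀ y - (ghUpdate n G)^[s] u₀ x ∧
      (ghUpdate n G)^[s'] u₀ x = 0 ∧ (ghUpdate n G)^[s' + 1] u₀ x = 0 := by
  intro m
  induction m with
  | zero =>
      intro s hs hstall
      simp only [Nat.add_zero] at hstall
      rcases gh_step (G := G) ((ghUpdate n G)^[s] u₀) x with h | ⟨h0, h1⟩
      · exact absurd (by rw [iter_succ']; exact h) hstall
      · exact ⟨s, le_rfl, rfl, h0, by rw [iter_succ']; exact h1⟩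
  | succ m ih =>
      intro s hs hstall
      by_cases hst : (ghUpdate n G)^[s + 1] u₀ x = (ghUpdate n G)^[s] u₀ x + 1
      · have hstall' : ¬ ((ghUpdate n G)^[(s+1) + m + 1] u₀ x
            = (ghUpdate n G)^[(s+1) + m] u₀ x + 1) := by
          rw [show (s+1) + m = s + (m+1) by omega]; exact hstall
        obtain ⟨s', hs', hf, h0, h1⟩ := ih (s+1) (by omega) hstall'
        refine ⟨s', by omega, ?_, h0, h1⟩
        rw [hf, hy s hs, hst]; ring
      · rcases gh_step (G := G) ((ghUpdate n G)^[s] u₀) x with h | ⟨h0, h1⟩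
        · exact absurd (by rw [iter_succ']; exact h) hst
        · exact ⟨s, le_rfl, rfl, h0, by rw [iter_succ']; exact h1⟩

lemma lockedB {x y : V} {t : ℕ} (hadj : G.Adj x y) (hy : locked n G u₀ y t) :
    ∃ t', t ≤ t' ∧ locked n G u₀ x t' := by
  haveI : NeZero n := ⟨by have := hn1.out; omega⟩
  suffices h : ∀ d s, t ≤ s →
      (n - 2) - (((ghUpdate n G)^[s] u₀ y - (ghUpdate n G)^[s] u₀ x) - 2).val ≤ d →
      ∃ t', t ≤ t' ∧ locked n G u₀ x t' by
    exact h n t le_rfl (by omega)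
  intro d
  induction d using Nat.strong_induction_on with
  | _ d ih =>
  intro s hs hd
  by_cases h1 : (ghUpdate n G)^[s] u₀ y = (ghUpdate n G)^[s] u₀ x + 1
  · exact ⟨s, hs, lockedA hadj (locked_mono hy hs) h1⟩
  by_cases h2 : ∃ m, ¬ ((ghUpdate n G)^[s + m + 1] u₀ x = (ghUpdate n G)^[s + m] u₀ x + 1)
  · obtain ⟨m, hm⟩ := h2
    obtain ⟨s', hs', hf, hx0, hx1⟩ := first_stall hy m s hs hm
    have hfy : (ghUpdate n G)^[s'+1] u₀ y = (ghUpdate n G)^[s'] u₀ y + 1 :=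
      hy s' (le_trans hs hs')
    have hfs' : (ghUpdate n G)^[s'] u₀ y
        = (ghUpdate n G)^[s] u₀ y - (ghUpdate n G)^[s] u₀ x := by
      rw [← hf, hx0, sub_zero]
    by_cases h0 : (ghUpdate n G)^[s] u₀ y - (ghUpdate n G)^[s] u₀ x = 0
    · have hsucc : (ghUpdate n G)^[s'+1] u₀ y = (ghUpdate n G)^[s'+1] u₀ x + 1 := by
        rw [hx1, hfy, hfs', h0, zero_add]
      exact ⟨s'+1, by omega, lockedA hadj (locked_mono hy (by omega)) hsucc⟩
    · have hne1 : (ghUpdate n G)^[s] u₀ y - (ghUpdate n G)^[s] u₀ x ≠ 1 := fun hc =>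
        h1 (by rw [sub_eq_iff_eq_add] at hc; rw [hc, add_comm])
      set a : ZMod n := (ghUpdate n G)^[s] u₀ y - (ghUpdate n G)^[s] u₀ x with ha
      have hglt : (a - 2).val < n := ZMod.val_lt _
      have hg1 : (a - 2).val ≠ n - 1 := by
        intro hc
        apply hne1
        have h' := zmod_eq_of_val_eq hc
        rw [cast_pred] at h'
        linear_combination h'
      have hg2 : (a - 2).val ≠ n - 2 := by
        intro hc
        apply h0
        have h' := zmod_eq_of_val_eq hc
        rw [cast_pred2] at h'
        linear_combination h'
      have hnew : (ghUpdate n G)^[s'+1] u₀ y - (ghUpdate n G)^[s'+1] u₀ x = a + 1 := by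
        rw [hx1, hfy, hfs', sub_zero]
      have hvnew : ((a + 1) - 2).val = (a - 2).val + 1 := by
        have he : (a + 1) - 2 = (a - 2) + 1 := by ring
        rw [he, ZMod.val_add_of_lt] <;> rw [ZMod.val_one]
        omega
      have hn2 : 2 ≤ n := hn1.out
      refine ih (d - 1) (by omega) (s' + 1) (by omega) ?_
      rw [hnew, hvnew]
      omega
  · push_neg at h2
    refine ⟨s, hs, fun s'' hs'' => ?_⟩
    obtain ⟨m, rfl⟩ := Nat.exists_eq_add_of_le hs''
    exact h2 m
end aux3

section aux4
variable {V : Type*} {n : ℕ} [hn1 : Fact (1 < n)] {G : SimpleGraph V} {u₀ : V → ZMod n}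

omit hn1 in
lemma seed_locked (hseed : hasSeed n G u₀) : ∃ v, locked n G u₀ v 0 := by
  obtain ⟨K, x, hK, hx0, hadjw, hval⟩ := hseed
  have hK0 : (K : ZMod n) = 0 := by
    have h1 := hval K le_rfl
    rw [hx0] at h1
    have h0 := hval 0 (by omega)
    rw [← h1, h0, Nat.cast_zero]
  have hvals : ∀ t, ∀ i ≤ K, (ghUpdate n G)^[t] u₀ (x i) = (i : ZMod n) + t := by
    intro t
    induction t with
    | zero => intro i hi; simpa using hval i hi
    | succ t ih =>
        intro i hi
        rw [iter_succ']
        by_cases hz : ((i : ZMod n) + t) = 0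
        · have hxi : (ghUpdate n G)^[t] u₀ (x i) = 0 := by rw [ih i hi]; exact hz
          by_cases hiK : i < K
          · have hw : (ghUpdate n G)^[t] u₀ (x (i+1)) = 1 := by
              rw [ih (i+1) hiK]
              push_cast
              rw [show (i:ZMod n) + 1 + t = ((i:ZMod n)+t) + 1 by ring, hz, zero_add]
            rw [gh_excite hxi ⟨x (i+1), hadjw i hiK, hw⟩, ih i hi]
            push_cast; ring
          · have hiK' : i = K := by omega
            subst hiK'
            have ht0 : (t : ZMod n) = 0 := by rw [hK0] at hz; simpa using hz
            have hw : (ghUpdate n G)^[t] u₀ (x 1) = 1 := by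
              rw [ih 1 (by omega)]; push_cast; rw [ht0, add_zero]
            have hadj1 : G.Adj (x i) (x 1) := by rw [hx0]; exact hadjw 0 (by omega)
            rw [gh_excite hxi ⟨x 1, hadj1, hw⟩, ih i le_rfl]
            push_cast; ring
        · have hxi : (ghUpdate n G)^[t] u₀ (x i) ≠ 0 := by rw [ih i hi]; exact hz
          rw [gh_incr hxi, ih i hi]
          push_cast; ring
  refine ⟨x 0, fun s _ => ?_⟩
  rw [hvals (s+1) 0 (by omega), hvals s 0 (by omega)]
  push_cast; ring

lemma all_locked [Fintype V] (hconn : G.Connected) (hseed : hasSeed n G u₀) :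
    ∃ T, ∀ v, locked n G u₀ v T := by
  obtain ⟨v₀, hv₀⟩ := seed_locked hseed
  have hall : ∀ v, ∃ t, locked n G u₀ v t := by
    have main : ∀ (a b : V) (w : G.Walk a b),
        (∃ t, locked n G u₀ a t) → ∃ t, locked n G u₀ b t := by
      intro a b w
      induction w with
      | nil => exact id
      | cons h p ih =>
          rintro ⟨t, ht⟩
          obtain ⟨t', _, ht'⟩ := lockedB h.symm ht
          exact ih ⟨t', ht'⟩
    intro v
    obtain ⟨w⟩ := hconn.preconnected v₀ v
    exact main v₀ v w ⟨0, hv₀⟩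
  choose tf htf using hall
  exact ⟨Finset.univ.sup tf, fun v => locked_mono (htf v) (Finset.le_sup (Finset.mem_univ v))⟩

end aux4


theorem stmt_11 {V : Type*} [Fintype V] (n : ℕ) (hn : 2 ≤ n) (G : SimpleGraph V)
    (hconn : G.Connected) (u₀ : V → ZMod n) (hseed : hasSeed n G u₀) :
    ∃ (T : ℕ) (par : V → V),
      (∀ x : V, G.Adj x (par x) ∧
        (ghUpdate n G)^[T] u₀ (par x) = (ghUpdate n G)^[T] u₀ x + 1) ∧
      (∀ x : V, ∃ k : ℕ, ∃ (K : ℕ) (xs : ℕ → V), 1 ≤ K ∧ xs K = xs 0 ∧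
        (∀ i < K, G.Adj (xs i) (xs (i + 1))) ∧
        (∀ i ≤ K, (ghUpdate n G)^[T] u₀ (xs i) = (i : ZMod n)) ∧
        ∃ i ≤ K, xs i = par^[k] x) := by
  haveI : NeZero n := ⟨by omega⟩
  haveI : Fact (1 < n) := ⟨by omega⟩
  obtain ⟨T, hT⟩ := all_locked hconn hseed
  have hpar : ∀ v : V, ∃ y, G.Adj v y ∧
      (ghUpdate n G)^[T] u₀ y = (ghUpdate n G)^[T] u₀ v + 1 := by
    intro v
    set k := (-((ghUpdate n G)^[T] u₀ v)).val with hk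
    have hrun := locked_run (hT v) k
    have hFk : (ghUpdate n G)^[T + k] u₀ v = 0 := by
      rw [hrun, hk, ZMod.natCast_val, ZMod.cast_id]; ring
    have hnext : (ghUpdate n G)^[T + k + 1] u₀ v = 1 := by
      rw [hT v (T + k) (by omega), hFk, zero_add]
    have hex : ∃ y, G.Adj v y ∧ (ghUpdate n G)^[T + k] u₀ y = 1 := by
      by_contra hno
      rw [iter_succ', gh_no hFk hno] at hnext
      exact one_ne_zero hnext.symm
    obtain ⟨y, hy1, hy2⟩ := hex
    refine ⟨y, hy1, ?_⟩
    have hruny := locked_run (hT y) k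
    have e1 : (ghUpdate n G)^[T] u₀ y + (k : ZMod n) = 1 := by rw [← hruny]; exact hy2
    have e2 : (ghUpdate n G)^[T] u₀ v + (k : ZMod n) = 0 := by rw [← hrun]; exact hFk
    linear_combination e1 - e2
  choose par hpadj hpval using hpar
  refine ⟨T, par, fun x => ⟨hpadj x, hpval x⟩, ?_⟩
  intro x
  have orbit : ∀ (v : V) (k : ℕ),
      (ghUpdate n G)^[T] u₀ (par^[k] v) = (ghUpdate n G)^[T] u₀ v + k := by
    intro v k
    induction k with
    | zero => simp
    | succ k ih =>
        rw [Function.iterate_succ_apply', hpval (par^[k] v), ih]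
        push_cast; ring
  obtain ⟨A, B, hAB, hfe⟩ := Finite.exists_ne_map_eq_of_infinite (fun k : ℕ => par^[k] x)
  have hper : ∃ a b : ℕ, a < b ∧ par^[a] x = par^[b] x := by
    rcases Nat.lt_or_gt_of_ne hAB with h | h
    exacts [⟨A, B, h, hfe⟩, ⟨B, A, h, hfe.symm⟩]
  obtain ⟨a, b, hab, he⟩ := hper
  set z := par^[a] x with hz
  set L := b - a with hL
  have hL1 : 1 ≤ L := by omega
  have hzL : par^[L] z = z := by
    rw [hz, ← Function.iterate_add_apply, show L + a = b by omega, ← he]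
  set j := (-((ghUpdate n G)^[T] u₀ z)).val with hj
  have hyv : (ghUpdate n G)^[T] u₀ (par^[j] z) = 0 := by
    rw [orbit z j, hj, ZMod.natCast_val, ZMod.cast_id]; ring
  refine ⟨j + a, L, fun i => par^[i] (par^[j] z), hL1, ?_, ?_, ?_, 0, Nat.zero_le _, ?_⟩
  · show par^[L] (par^[j] z) = par^[0] (par^[j] z)
    rw [Function.iterate_zero_apply, ← Function.iterate_add_apply,
      show L + j = j + L by omega, Function.iterate_add_apply, hzL]
  · intro i _
    show G.Adj (par^[i] (par^[j] z)) (par^[i+1] (par^[j] z))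
    rw [Function.iterate_succ_apply']
    exact hpadj _
  · intro i _
    show (ghUpdate n G)^[T] u₀ (par^[i] (par^[j] z)) = (i : ZMod n)
    rw [orbit _ i, hyv, zero_add]
  · show par^[0] (par^[j] z) = par^[j + a] x
    rw [Function.iterate_zero_apply, hz, ← Function.iterate_add_apply]
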